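/- Let f : ℝⁿ → ℝ be C^1 near x̄ and suppose there exist c > 0, δ > 0 with ‖∇f(x)‖ ≥ c·‖x − x̄‖^{r−1} for all ‖x − x̄‖ ≤ δ, where x̄ is a local minimum of f. Then there exist c' > 0, δ' > 0 such that f(x) − f(x̄) ≥ c'·‖x − x̄‖^r for all ‖x − x̄‖ ≤ δ'. -/

import Mathlib

set_option maxHeartbeats 1000000

open Filter Metric Set Topology

/-- Special case `S = {xbar}`: the gradient inequality `‖∇f(x)‖ ≥ c‖x - xbar‖^(r-1)` at a
local minimum implies the growth condition `f(x) - f(xbar) ≥ c'‖x - xbar‖^r`. -/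
theorem stmt_7 {n : ℕ} (r : ℕ) (hr : 1 ≤ r) (f : EuclideanSpace ℝ (Fin n) → ℝ)
    (xbar : EuclideanSpace ℝ (Fin n)) (U : Set (EuclideanSpace ℝ (Fin n)))
    (hU : IsOpen U) (hx : xbar ∈ U) (hf : ContDiffOn ℝ 1 f U)
    (hmin : IsLocalMin f xbar)
    (c δ : ℝ) (hc : 0 < c) (hδ : 0 < δ)
    (hgrad : ∀ x, ‖x - xbar‖ ≤ δ → c * ‖x - xbar‖ ^ (r - 1) ≤ ‖gradient f x‖) :
    ∃ c' > (0 : ℝ), ∃ δ' > (0 : ℝ), ∀ x, ‖x - xbar‖ ≤ δ' →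
      c' * ‖x - xbar‖ ^ r ≤ f x - f xbar := by
  obtain ⟨m, rfl⟩ : ∃ m, r = m + 1 := ⟨r - 1, (Nat.succ_pred_eq_of_pos hr).symm⟩
  simp only [Nat.add_sub_cancel] at hgrad
  -- choose a radius ρ with good properties
  obtain ⟨ρ₀, hρ₀, hρ₀U⟩ : ∃ ρ₀ > 0, closedBall xbar ρ₀ ⊆ U := by
    rcases Metric.isOpen_iff.1 hU xbar hx with ⟨ε, hε, hball⟩
    exact ⟨ε / 2, by linarith, (closedBall_subset_ball (by linarith)).trans hball⟩
  obtain ⟨ρ₁, hρ₁, hmin'⟩ : ∃ ρ₁ > 0, ∀ z, dist z xbar < ρ₁ → f xbar ≤ f z :=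
    Metric.eventually_nhds_iff_ball.1 hmin
  set ρ : ℝ := min ρ₀ (min (ρ₁ / 2) δ) with hρdef
  have hρ : 0 < ρ := lt_min hρ₀ (lt_min (by linarith) hδ)
  have hρU : closedBall xbar ρ ⊆ U :=
    (closedBall_subset_closedBall (min_le_left _ _)).trans hρ₀U
  have hρδ : ρ ≤ δ := (min_le_right _ _).trans (min_le_right _ _)
  have hρmin : ∀ z ∈ closedBall xbar ρ, f xbar ≤ f z := by
    intro z hz
    refine hmin' z ?_
    have h1 : dist z xbar ≤ ρ := mem_closedBall.1 hz
    have h2 : ρ ≤ ρ₁ / 2 := (min_le_right _ _).trans (min_le_left _ _)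
    linarith
  refine ⟨c / 2 ^ (m + 2), by positivity, ρ / 2, by linarith, fun x hxρ => ?_⟩
  rcases eq_or_lt_of_le (norm_nonneg (x - xbar)) with hN0 | hN0
  · have hx0 : x = xbar := by
      have := norm_eq_zero.1 hN0.symm
      simpa [sub_eq_zero] using this
    simp [hx0]
  set N : ℝ := ‖x - xbar‖ with hNdef
  by_contra hcon
  push_neg at hcon
  set ε : ℝ := c / 2 ^ (m + 2) * N ^ (m + 1) with hεdef
  have hε : 0 < ε := by positivity
  set lam : ℝ := N / 2 with hlamdef
  have hlam : 0 < lam := by positivity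
  set κ : ℝ := ε / lam with hκdef
  have hκ : 0 < κ := by positivity
  have hxball : x ∈ closedBall xbar ρ := by
    rw [mem_closedBall, dist_eq_norm]; linarith
  -- minimize the penalized function on the compact ball
  set g : EuclideanSpace ℝ (Fin n) → ℝ := fun z => f z + κ * ‖z - x‖ with hgdef
  have hgc : ContinuousOn g (closedBall xbar ρ) := by
    refine ContinuousOn.add (hf.continuousOn.mono hρU) ?_
    exact (continuous_const.mul ((continuous_id.sub continuous_const).norm)).continuousOn
  obtain ⟨y, hyB, hymin⟩ : ∃ y ∈ closedBall xbar ρ, ∀ z ∈ closedBall xbar ρ, g y ≤ g z := by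
    obtain ⟨y, hyB, hm⟩ := (isCompact_closedBall xbar ρ).exists_isMinOn
      ⟨xbar, mem_closedBall_self hρ.le⟩ hgc
    exact ⟨y, hyB, fun z hz => hm hz⟩
  have hfy : f xbar ≤ f y := hρmin y hyB
  have hgyx : g y ≤ f x := by
    have := hymin x hxball
    simpa [hgdef] using this
  have hyx : ‖y - x‖ < lam := by
    have h1 : κ * ‖y - x‖ ≤ f x - f y := by
      have : f y + κ * ‖y - x‖ ≤ f x := hgyx
      linarith
    have h2 : f x - f y < ε := by
      have : f x - f xbar < ε := hcon
      linarith
    have h3 : κ * ‖y - x‖ < κ * lam := by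
      have : κ * lam = ε := by rw [hκdef]; exact div_mul_cancel₀ ε hlam.ne'
      linarith
    exact lt_of_mul_lt_mul_left h3 hκ.le
  have hylb : lam ≤ ‖y - xbar‖ := by
    have : ‖x - xbar‖ ≤ ‖x - y‖ + ‖y - xbar‖ := norm_sub_le_norm_sub_add_norm_sub x y xbar
    have h4 : ‖x - y‖ < lam := by rwa [norm_sub_rev]
    have : N ≤ ‖x - y‖ + ‖y - xbar‖ := this
    linarith [hlamdef ▸ (by linarith : N = 2 * lam)]
  have hyub : ‖y - xbar‖ < ρ := by
    have : ‖y - xbar‖ ≤ ‖y - x‖ + ‖x - xbar‖ := norm_sub_le_norm_sub_add_norm_sub y x xbar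
    have hNρ : N ≤ ρ / 2 := hxρ
    have : ‖y - xbar‖ < lam + N := by linarith
    have : ‖y - xbar‖ < 3 / 4 * ρ := by
      have : lam ≤ ρ / 4 := by rw [hlamdef]; linarith
      linarith
    linarith
  have hyδ : ‖y - xbar‖ ≤ δ := le_trans hyub.le hρδ
  have hyU : y ∈ U := hρU hyB
  -- the gradient at y
  set G : EuclideanSpace ℝ (Fin n) := gradient f y with hGdef
  have hGlb : c * lam ^ m ≤ ‖G‖ := by
    refine le_trans ?_ (hgrad y hyδ)
    exact mul_le_mul_of_nonneg_left (pow_le_pow_left₀ hlam.le hylb m) hc.le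
  have hGpos : 0 < ‖G‖ := lt_of_lt_of_le (by positivity) hGlb
  have hdiff : DifferentiableAt ℝ f y :=
    (hf.contDiffAt (hU.mem_nhds hyU)).differentiableAt one_ne_zero
  have hG : HasGradientAt f G y := hdiff.hasGradientAt
  -- directional derivative along v = -G
  set v : EuclideanSpace ℝ (Fin n) := -G with hvdef
  have hψ : HasDerivAt (fun t : ℝ => f (y + t • v)) (-‖G‖ ^ 2) 0 := by
    have hline : HasDerivAt (fun t : ℝ => y + t • v) v 0 := by
      simpa using ((hasDerivAt_id (0 : ℝ)).smul_const v).const_add y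
    have hcomp := (hG.hasFDerivAt).comp_hasDerivAt_of_eq 0 hline (by simp)
    have hval : (InnerProductSpace.toDual ℝ (EuclideanSpace ℝ (Fin n)) G) v = -‖G‖ ^ 2 := by
      rw [InnerProductSpace.toDual_apply_apply, hvdef, inner_neg_right, real_inner_self_eq_norm_sq]
    rw [hval] at hcomp
    exact hcomp
  -- key inequality from minimality: slope is bounded below
  have hslope : ∀ᶠ t in 𝓝[>] (0 : ℝ), -(κ * ‖v‖) ≤ slope (fun t : ℝ => f (y + t • v)) 0 t := by
    set t₀ : ℝ := (ρ - ‖y - xbar‖) / (‖v‖ + 1) with ht₀def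
    have ht₀ : 0 < t₀ := by
      apply div_pos (by linarith) (by positivity)
    filter_upwards [Ioo_mem_nhdsGT_of_mem (Set.left_mem_Ico.2 ht₀)] with t ht
    obtain ⟨ht1, ht2⟩ := ht
    have htv : ‖t • v‖ = t * ‖v‖ := by
      rw [norm_smul, Real.norm_of_nonneg ht1.le]
    have hzball : y + t • v ∈ closedBall xbar ρ := by
      rw [mem_closedBall, dist_eq_norm]
      have h1 : ‖y + t • v - xbar‖ ≤ ‖t • v‖ + ‖y - xbar‖ := by
        have : y + t • v - xbar = t • v + (y - xbar) := by abel
        rw [this]; exact norm_add_le _ _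
      have h2 : t * (‖v‖ + 1) < ρ - ‖y - xbar‖ := by
        have := (lt_div_iff₀ (by positivity : (0:ℝ) < ‖v‖ + 1)).1 ht2
        linarith
      nlinarith [norm_nonneg v]
    have hkey : f y - κ * (t * ‖v‖) ≤ f (y + t • v) := by
      have h7 : f y + κ * ‖y - x‖ ≤ f (y + t • v) + κ * ‖y + t • v - x‖ := hymin _ hzball
      have h5 : ‖y + t • v - x‖ ≤ ‖y - x‖ + t * ‖v‖ := by
        have he : y + t • v - x = (y - x) + t • v := by abel
        rw [he]
        calc ‖(y - x) + t • v‖ ≤ ‖y - x‖ + ‖t • v‖ := norm_add_le _ _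
          _ = ‖y - x‖ + t * ‖v‖ := by rw [htv]
      have h6 : κ * ‖y + t • v - x‖ ≤ κ * (‖y - x‖ + t * ‖v‖) :=
        mul_le_mul_of_nonneg_left h5 hκ.le
      have h9 : κ * (‖y - x‖ + t * ‖v‖) = κ * ‖y - x‖ + κ * (t * ‖v‖) := by ring
      linarith
    have h8 : -(κ * ‖v‖) ≤ (f (y + t • v) - f y) / t := by
      rw [le_div_iff₀ ht1]
      have hring : -(κ * ‖v‖) * t = -(κ * (t * ‖v‖)) := by ring
      linarith
    rw [slope_def_field]
    simpa [zero_smul] using h8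
  -- pass to the limit
  have htend : Tendsto (slope (fun t : ℝ => f (y + t • v)) 0) (𝓝[>] (0:ℝ)) (𝓝 (-‖G‖ ^ 2)) :=
    (hasDerivAt_iff_tendsto_slope.1 hψ).mono_left
      (nhdsWithin_mono 0 fun t ht => ne_of_gt ht)
  have hlim : -(κ * ‖v‖) ≤ -‖G‖ ^ 2 :=
    ge_of_tendsto htend hslope
  have hvnorm : ‖v‖ = ‖G‖ := by rw [hvdef, norm_neg]
  have hGκ : ‖G‖ ≤ κ := by
    rw [hvnorm] at hlim
    nlinarith
  -- final contradiction
  have hκval : κ = c / 2 * lam ^ m := by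
    rw [hκdef, hεdef, hlamdef]
    have hN2 : N = 2 * (N / 2) := by ring
    field_simp
    have h2 : (1/2:ℝ)^m * 2^m = 1 := by rw [← mul_pow]; norm_num
    linear_combination (-(N * N ^ m * 4)) * h2
  nlinarith [pow_pos hlam m]
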